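/- arXiv:2508.12256 — 4 statements merged into one kernel-verified Lean document; each statement's English description precedes it below -/
import Mathlib

section
/- Let Λ = diag(λ_1,...,λ_d) with all λ_i ≥ 0 and let D = Σ_{i,j} E_{ij} ⊗ D_{ij} be positive semi-definite with D_{ii} = 0 whenever λ_i = 0. Then Z solves (Λ ⊗ 1)Z + Z(Λ ⊗ 1) = D if and only if Z = Σ_{λ_i+λ_j≠0} E_{ij} ⊗ D_{ij}/(λ_i+λ_j) + Σ_{λ_i+λ_j=0} E_{ij} ⊗ W_{ij} for some matrices W_{ij}. -/
open Matrix Kronecker ComplexOrder BigOperators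

lemma sum_kron_entry {d n : ℕ} (C : Fin d → Fin d → Matrix (Fin n) (Fin n) ℂ)
    (i j : Fin d) (a b : Fin n) :
    (∑ k : Fin d, ∑ l : Fin d, Matrix.single k l (1:ℂ) ⊗ₖ C k l) (i,a) (j,b)
      = C i j a b := by
  simp [Matrix.sum_apply, kroneckerMap_apply, Matrix.single_apply, ite_and,
    Finset.sum_ite_eq, Finset.sum_ite_eq']

lemma psd_row_zero {m : Type*} [Fintype m] [DecidableEq m]
    {M : Matrix m m ℂ} (hM : M.PosSemidef) {k : m} (hk : M k k = 0) (l : m) :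
    M k l = 0 := by
  obtain ⟨B, rfl⟩ : ∃ B : Matrix m m ℂ, M = Bᴴ * B := by
    open scoped MatrixOrder in
    obtain ⟨a, rfl⟩ := CStarAlgebra.nonneg_iff_eq_star_mul_self.mp hM.nonneg
    exact ⟨a, rfl⟩
  have h0 : ∀ a, B a k = 0 := by
    have hk' : ∑ a, Complex.normSq (B a k) = 0 := by
      have : (Bᴴ * B) k k = (↑(∑ a, Complex.normSq (B a k)) : ℂ) := by
        simp [Matrix.mul_apply, conjTranspose_apply, Complex.normSq_eq_conj_mul_self]
      rw [this] at hk
      exact_mod_cast hk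
    intro a
    have := (Finset.sum_eq_zero_iff_of_nonneg (fun a _ => Complex.normSq_nonneg (B a k))).mp
      hk' a (Finset.mem_univ a)
    exact Complex.normSq_eq_zero.mp this
  simp [Matrix.mul_apply, conjTranspose_apply, h0]
/-- Let `Λ = diag(λ)` with all `λ i ≥ 0`, and let `D = Σ E_{ij} ⊗ D_{ij}` be positive
semi-definite with `D_{ii} = 0` whenever `λ i = 0`. Then `Z` solves the Sylvester equation
`(Λ ⊗ 1)Z + Z(Λ ⊗ 1) = D` iff
`Z = Σ_{λ_i+λ_j ≠ 0} E_{ij} ⊗ D_{ij}/(λ_i+λ_j) + Σ_{λ_i+λ_j = 0} E_{ij} ⊗ W_{ij}`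
for some family of matrices `W`. -/
theorem stmt_8 {d n : ℕ} (lam : Fin d → ℝ) (hlam : ∀ i, 0 ≤ lam i)
    (Dblk : Fin d → Fin d → Matrix (Fin n) (Fin n) ℂ)
    (hD : (∑ i : Fin d, ∑ j : Fin d, Matrix.single i j (1 : ℂ) ⊗ₖ Dblk i j).PosSemidef)
    (hzero : ∀ i, lam i = 0 → Dblk i i = 0)
    (Z : Matrix (Fin d × Fin n) (Fin d × Fin n) ℂ) :
    ((Matrix.diagonal (fun i => (lam i : ℂ)) ⊗ₖ (1 : Matrix (Fin n) (Fin n) ℂ)) * Z +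
        Z * (Matrix.diagonal (fun i => (lam i : ℂ)) ⊗ₖ (1 : Matrix (Fin n) (Fin n) ℂ)) =
      ∑ i : Fin d, ∑ j : Fin d, Matrix.single i j (1 : ℂ) ⊗ₖ Dblk i j) ↔
    ∃ W : Fin d → Fin d → Matrix (Fin n) (Fin n) ℂ,
      Z = (∑ i : Fin d, ∑ j : Fin d,
            if lam i + lam j ≠ 0 then
              Matrix.single i j (1 : ℂ) ⊗ₖ (((lam i + lam j : ℂ)⁻¹) • Dblk i j)
            else Matrix.single i j (1 : ℂ) ⊗ₖ W i j) := by

  classical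
  set Λ := Matrix.diagonal (fun p : Fin d × Fin n => (lam p.1 : ℂ)) with hΛ
  have hkd : (Matrix.diagonal (fun i => (lam i : ℂ)) ⊗ₖ (1 : Matrix (Fin n) (Fin n) ℂ))
      = Λ := by
    rw [← Matrix.diagonal_one, Matrix.diagonal_kronecker_diagonal]
    simp [hΛ]
  rw [hkd]
  have key : ∀ i j, lam i + lam j = 0 → Dblk i j = 0 := by
    intro i j h
    have hi : lam i = 0 := le_antisymm (by nlinarith [hlam j]) (hlam i)
    ext a b
    have hdiag : (∑ k : Fin d, ∑ l : Fin d, Matrix.single k l (1:ℂ) ⊗ₖ Dblk k l)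
        (i,a) (i,a) = 0 := by
      rw [sum_kron_entry]; simp [hzero i hi]
    have := psd_row_zero hD hdiag (j, b)
    rwa [sum_kron_entry] at this
  have entry : ∀ (i j : Fin d) (a b : Fin n),
      (Λ * Z + Z * Λ) (i,a) (j,b)
        = ((lam i : ℂ) + lam j) * Z (i,a) (j,b) := by
    intro i j a b
    simp [hΛ, Matrix.add_apply, Matrix.diagonal_mul, Matrix.mul_diagonal]
    ring
  constructor
  · intro hEq
    refine ⟨fun i j => Matrix.of (fun a b => Z (i,a) (j,b)), ?_⟩
    ext ⟨i, a⟩ ⟨j, b⟩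
    have h1 : ∀ k l, (if lam k + lam l ≠ 0 then
          Matrix.single k l (1 : ℂ) ⊗ₖ (((lam k + lam l : ℂ)⁻¹) • Dblk k l)
        else Matrix.single k l (1 : ℂ) ⊗ₖ Matrix.of (fun a b => Z (k,a) (l,b)))
        = Matrix.single k l (1 : ℂ) ⊗ₖ (if lam k + lam l ≠ 0 then
            ((lam k + lam l : ℂ)⁻¹) • Dblk k l else Matrix.of (fun a b => Z (k,a) (l,b))) := by
      intro k l
      split <;> rfl
    simp_rw [h1]
    rw [sum_kron_entry]
    have hE : ((lam i : ℂ) + lam j) * Z (i,a) (j,b) = Dblk i j a b := by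
      rw [← entry, hEq, sum_kron_entry]
    by_cases hc : lam i + lam j = 0
    · simp [hc]
    · have hc' : ((lam i : ℂ) + lam j) ≠ 0 := by
        intro h'; apply hc; exact_mod_cast h'
      simp only [hc, not_false_iff, if_pos, ne_eq, Matrix.smul_apply, smul_eq_mul]
      field_simp
      rw [← hE]; ring
  · rintro ⟨W, rfl⟩
    ext ⟨i, a⟩ ⟨j, b⟩
    rw [entry, sum_kron_entry]
    have h1 : ∀ k l, (if lam k + lam l ≠ 0 then
          Matrix.single k l (1 : ℂ) ⊗ₖ (((lam k + lam l : ℂ)⁻¹) • Dblk k l)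
        else Matrix.single k l (1 : ℂ) ⊗ₖ W k l)
        = Matrix.single k l (1 : ℂ) ⊗ₖ (if lam k + lam l ≠ 0 then
            ((lam k + lam l : ℂ)⁻¹) • Dblk k l else W k l) := by
      intro k l
      split <;> rfl
    simp_rw [h1, sum_kron_entry]
    by_cases hc : lam i + lam j = 0
    · have hc0 : ((lam i : ℂ) + lam j) = 0 := by exact_mod_cast hc
      simp [hc, key i j hc, hc0]
    · have hc' : ((lam i : ℂ) + lam j) ≠ 0 := by
        intro h'; apply hc; exact_mod_cast h'
      simp only [hc, not_false_iff, if_pos, ne_eq, Matrix.smul_apply, smul_eq_mul]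
      field_simp
end

section
/- Let Λ = diag(λ_1,...,λ_d) with all λ_i ≥ 0 and let D = Σ_{i,j} E_{ij} ⊗ D_{ij} be positive semi-definite with D_{ii} = 0 whenever λ_i = 0. Then the matrix Σ_{{i,j : λ_i+λ_j ≠ 0}} E_{ij} ⊗ D_{ij}/(λ_i+λ_j) is positive semi-definite. -/
open Matrix Kronecker ComplexOrder BigOperators MeasureTheory Set

private lemma integral_exp_aux (b : ℝ) (hb : 0 < b) :
    ∫ t in Ioi (0:ℝ), Real.exp (-(b * t)) = b⁻¹ := by
  have h := integral_exp_neg_mul_rpow one_pos hb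
  simp only [Real.rpow_one] at h
  simp_rw [neg_mul] at h
  rw [h, show (-1/1 : ℝ) = -1 by norm_num, Real.rpow_neg_one]
  norm_num [Real.Gamma_two]

private lemma integral_exp_aux' (b : ℝ) (hb : 0 < b) :
    (∫ t in Ioi (0:ℝ), ((Real.exp (-(b * t)) : ℝ) : ℂ)) = ((b⁻¹ : ℝ) : ℂ) := by
  rw [show (∫ t in Ioi (0:ℝ), ((Real.exp (-(b * t)) : ℝ) : ℂ))
      = ((∫ t in Ioi (0:ℝ), Real.exp (-(b * t)) : ℝ) : ℂ) from integral_ofReal,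
    integral_exp_aux b hb]

private lemma sum_kron_apply {d n : ℕ} (f : Fin d → Fin d → Matrix (Fin n) (Fin n) ℂ)
    (p q : Fin d × Fin n) :
    (∑ i : Fin d, ∑ j : Fin d, single i j (1 : ℂ) ⊗ₖ f i j) p q
      = f p.1 q.1 p.2 q.2 := by
  simp [Matrix.sum_apply, Matrix.single_apply, ite_and, Matrix.of_apply, kroneckerMap_apply]

private lemma col_zero {N : Type*} [Fintype N] [DecidableEq N] {A : Matrix N N ℂ}
    (hA : A.PosSemidef) {p : N} (h : A p p = 0) (q : N) : A q p = 0 := by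
  have hx : star (Pi.single p (1:ℂ)) ⬝ᵥ A *ᵥ (Pi.single p 1) = 0 := by
    simp [dotProduct, mulVec, Pi.single_apply, apply_ite, h]
  have h2 := (hA.dotProduct_mulVec_zero_iff _).mp hx
  have h3 := congrFun h2 q
  simpa [mulVec, dotProduct, Pi.single_apply] using h3

/-- Let `Λ = diag(λ)` with all `λ i ≥ 0`, and let `D = Σ E_{ij} ⊗ D_{ij}` be positive
semi-definite with `D_{ii} = 0` whenever `λ i = 0`. Then the block matrix
`Σ_{λ_i+λ_j ≠ 0} E_{ij} ⊗ D_{ij}/(λ_i+λ_j)` is positive semi-definite. -/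
theorem stmt_9 {d n : ℕ} (lam : Fin d → ℝ) (hlam : ∀ i, 0 ≤ lam i)
    (Dblk : Fin d → Fin d → Matrix (Fin n) (Fin n) ℂ)
    (hD : (∑ i : Fin d, ∑ j : Fin d, single i j (1 : ℂ) ⊗ₖ Dblk i j).PosSemidef)
    (hzero : ∀ i, lam i = 0 → Dblk i i = 0) :
    (∑ i : Fin d, ∑ j : Fin d,
      if lam i + lam j ≠ 0 then
        single i j (1 : ℂ) ⊗ₖ (((lam i + lam j : ℂ)⁻¹) • Dblk i j)
      else 0).PosSemidef := by
  classical
  set A : Matrix (Fin d × Fin n) (Fin d × Fin n) ℂ :=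
    Matrix.of (fun p q => Dblk p.1 q.1 p.2 q.2) with hAdef
  have hAeq : (∑ i : Fin d, ∑ j : Fin d, single i j (1 : ℂ) ⊗ₖ Dblk i j) = A := by
    ext p q; rw [sum_kron_apply]; rfl
  rw [hAeq] at hD
  have hherm : ∀ p q : Fin d × Fin n, (starRingEnd ℂ) (A q p) = A p q := by
    intro p q
    simpa [Complex.star_def] using hD.1.apply p q
  have hcol : ∀ i, lam i = 0 → ∀ (j : Fin d) (a b : Fin n), Dblk j i a b = 0 := by
    intro i hi j a b
    have hdiag : A (i, b) (i, b) = 0 := by simp [hAdef, hzero i hi]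
    exact col_zero hD hdiag (j, a)
  have hrow : ∀ i, lam i = 0 → ∀ (j : Fin d) (a b : Fin n), Dblk i j a b = 0 := by
    intro i hi j a b
    have h1 := hherm (i, a) (j, b)
    rw [show A (j, b) (i, a) = Dblk j i b a from rfl, hcol i hi j b a] at h1
    simpa [hAdef] using h1.symm
  set μ : Fin d → ℝ := fun i => if lam i = 0 then 1 else lam i with hμdef
  have hμ : ∀ i, 0 < μ i := by
    intro i
    by_cases h : lam i = 0
    · simp [hμdef, h]
    · simp only [hμdef, h, if_false]
      exact lt_of_le_of_ne (hlam i) (Ne.symm h)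
  have hterm : ∀ i j, (if lam i + lam j ≠ 0 then
        single i j (1 : ℂ) ⊗ₖ (((lam i + lam j : ℂ)⁻¹) • Dblk i j)
      else 0) = single i j (1 : ℂ) ⊗ₖ ((((μ i + μ j : ℝ) : ℂ)⁻¹) • Dblk i j) := by
    intro i j
    by_cases hi : lam i = 0
    · have hz : Dblk i j = 0 := by ext a b; exact hrow i hi j a b
      simp [hz]
    · by_cases hj : lam j = 0
      · have hz : Dblk i j = 0 := by ext a b; exact hcol j hj i a b
        simp [hz]
      · have hi' := lt_of_le_of_ne (hlam i) (Ne.symm hi)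
        have hj' := lt_of_le_of_ne (hlam j) (Ne.symm hj)
        rw [if_pos (by positivity)]
        have hc : ((μ i + μ j : ℝ) : ℂ) = ((lam i : ℂ) + (lam j : ℂ)) := by
          simp [hμdef, hi, hj]
        rw [hc]
  set M : Matrix (Fin d × Fin n) (Fin d × Fin n) ℂ :=
    Matrix.of (fun p q => (((μ p.1 + μ q.1 : ℝ) : ℂ)⁻¹) * Dblk p.1 q.1 p.2 q.2) with hMdef
  have hMeq : (∑ i : Fin d, ∑ j : Fin d,
      if lam i + lam j ≠ 0 then
        single i j (1 : ℂ) ⊗ₖ (((lam i + lam j : ℂ)⁻¹) • Dblk i j)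
      else 0) = M := by
    ext p q
    simp_rw [hterm]
    rw [sum_kron_apply (fun i j => (((μ i + μ j : ℝ) : ℂ)⁻¹) • Dblk i j)]
    simp [hMdef]
  rw [hMeq, posSemidef_iff_dotProduct_mulVec]
  constructor
  · -- Hermitian
    ext p q
    simp only [conjTranspose_apply, hMdef, Matrix.of_apply, star_mul', Complex.star_def,
      ← Complex.ofReal_inv, Complex.conj_ofReal]
    rw [show (starRingEnd ℂ) (Dblk q.1 p.1 q.2 p.2) = Dblk p.1 q.1 p.2 q.2 from hherm p q,
      add_comm (μ q.1) (μ p.1)]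
  · intro x
    set k : (Fin d × Fin n) → (Fin d × Fin n) → ℂ :=
      fun p q => (starRingEnd ℂ) (x p) * A p q * x q with hkdef
    have hint : ∀ (b : ℝ), 0 < b →
        Integrable (fun t : ℝ => ((Real.exp (-(b * t)) : ℝ) : ℂ))
          (MeasureTheory.volume.restrict (Ioi 0)) := by
      intro b hb
      have h1 := exp_neg_integrableOn_Ioi 0 hb
      simp_rw [neg_mul] at h1 ⊢
      exact h1.ofReal
    set g : ℝ → ℂ := fun t => ∑ p : Fin d × Fin n, ∑ q : Fin d × Fin n,
      k p q * ((Real.exp (-((μ p.1 + μ q.1) * t)) : ℝ) : ℂ) with hgdef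
    have hginteg : Integrable g (MeasureTheory.volume.restrict (Ioi 0)) := by
      refine integrable_finset_sum _ (fun p _ => integrable_finset_sum _ (fun q _ => ?_))
      exact (hint _ (by have := hμ p.1; have := hμ q.1; positivity)).const_mul _
    have hquad : star x ⬝ᵥ M *ᵥ x = ∫ t in Ioi (0:ℝ), g t := by
      rw [show (∫ t in Ioi (0:ℝ), g t)
          = ∑ p : Fin d × Fin n, ∫ t in Ioi (0:ℝ), ∑ q : Fin d × Fin n,
              k p q * ((Real.exp (-((μ p.1 + μ q.1) * t)) : ℝ) : ℂ) from
        MeasureTheory.integral_finset_sum _ (fun p _ =>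
          integrable_finset_sum _ (fun q _ =>
            (hint _ (by have := hμ p.1; have := hμ q.1; positivity)).const_mul _))]
      have hp : ∀ p : Fin d × Fin n, (∫ t in Ioi (0:ℝ), ∑ q : Fin d × Fin n,
          k p q * ((Real.exp (-((μ p.1 + μ q.1) * t)) : ℝ) : ℂ))
          = ∑ q : Fin d × Fin n, k p q * (((μ p.1 + μ q.1 : ℝ) : ℂ))⁻¹ := by
        intro p
        rw [MeasureTheory.integral_finset_sum _ (fun q _ =>
          (hint _ (by have := hμ p.1; have := hμ q.1; positivity)).const_mul _)]
        refine Finset.sum_congr rfl (fun q _ => ?_)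
        rw [MeasureTheory.integral_const_mul,
          integral_exp_aux' _ (by have := hμ p.1; have := hμ q.1; positivity)]
        norm_cast
      simp_rw [hp]
      simp only [dotProduct, mulVec, hMdef, Matrix.of_apply, hkdef, hAdef, Finset.mul_sum]
      refine Finset.sum_congr rfl (fun p _ => Finset.sum_congr rfl (fun q _ => ?_))
      simp only [Pi.star_apply, RCLike.star_def]
      ring
    rw [hquad]
    have hg0 : ∀ t : ℝ, 0 ≤ g t := by
      intro t
      set y : (Fin d × Fin n) → ℂ :=
        fun p => ((Real.exp (-(μ p.1 * t)) : ℝ) : ℂ) * x p with hydef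
      have hgy : g t = star y ⬝ᵥ A *ᵥ y := by
        simp only [hgdef, dotProduct, mulVec, Finset.mul_sum, hydef, hkdef,
          Pi.star_apply, RCLike.star_def, _root_.map_mul, Complex.conj_ofReal]
        refine Finset.sum_congr rfl (fun p _ => Finset.sum_congr rfl (fun q _ => ?_))
        have he : Real.exp (-((μ p.1 + μ q.1) * t))
            = Real.exp (-(μ p.1 * t)) * Real.exp (-(μ q.1 * t)) := by
          rw [← Real.exp_add]; ring_nf
        rw [he, Complex.ofReal_mul]
        ring
      rw [hgy]
      exact hD.dotProduct_mulVec_nonneg y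
    rw [Complex.le_def]
    constructor
    · have h := integral_re (𝕜 := ℂ) hginteg
      simp only [RCLike.re_to_complex] at h
      rw [← h]
      simp only [Complex.zero_re]
      refine MeasureTheory.integral_nonneg (fun t => ?_)
      have h1 := hg0 t
      rw [Complex.le_def] at h1
      simpa using h1.1
    · have h := integral_im (𝕜 := ℂ) hginteg
      simp only [RCLike.im_to_complex] at h
      rw [← h]
      simp only [Complex.zero_im]
      have h2 : ∀ t : ℝ, Complex.im (g t) = 0 := by
        intro t
        have h1 := hg0 t
        rw [Complex.le_def] at h1
        simpa using h1.2.symm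
      simp [h2]
end

section
/- If D is positive semi-definite and λ_i ≥ 0 with Σ_{j : λ_i+λ_j ≠ 0} terms as above, then for any vector v = Σ_k e_k ⊗ v_k, one has v† (Σ_{λ_i+λ_j≠0} E_{ij} ⊗ D_{ij}/(λ_i+λ_j)) v = ∫_0^∞ v(t)† D v(t) dt ≥ 0, where v(t) = Σ_k e^{-tλ_k} e_k ⊗ v_k. -/
open Matrix Kronecker ComplexOrder BigOperators MeasureTheory

private lemma aux_exp_integral {s : ℝ} (hs : 0 < s) :
    ∫ t in Set.Ioi (0:ℝ), Real.exp (-(s * t)) = s⁻¹ := by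
  have h := MeasureTheory.integral_comp_mul_left_Ioi (fun x => Real.exp (-x)) 0 hs
  simp [integral_exp_neg_Ioi, smul_eq_mul] at h
  simpa [integral_exp_Iic_zero] using h

/-- For `D = Σ E_{ij} ⊗ D_{ij}` positive semi-definite, `λ i ≥ 0` with `D_{ij} = 0`
whenever `λ_i + λ_j = 0`, and any vector `v = Σ_k e_k ⊗ v_k`, one has
`v† (Σ_{λ_i+λ_j≠0} E_{ij} ⊗ D_{ij}/(λ_i+λ_j)) v = ∫_0^∞ v(t)† D v(t) dt ≥ 0`,
where `v(t) = Σ_k e^{-tλ_k} e_k ⊗ v_k`. -/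
theorem stmt_11 {d n : ℕ} (lam : Fin d → ℝ) (hlam : ∀ i, 0 ≤ lam i)
    (Dblk : Fin d → Fin d → Matrix (Fin n) (Fin n) ℂ)
    (hD : (∑ i : Fin d, ∑ j : Fin d, Matrix.single i j (1 : ℂ) ⊗ₖ Dblk i j).PosSemidef)
    (hzero : ∀ i j, lam i + lam j = 0 → Dblk i j = 0)
    (v : Fin d × Fin n → ℂ) :
    let X : Matrix (Fin d × Fin n) (Fin d × Fin n) ℂ :=
      ∑ i : Fin d, ∑ j : Fin d,
        if lam i + lam j ≠ 0 then
          Matrix.single i j (1 : ℂ) ⊗ₖ (((lam i + lam j : ℂ)⁻¹) • Dblk i j)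
        else 0
    let D : Matrix (Fin d × Fin n) (Fin d × Fin n) ℂ :=
      ∑ i : Fin d, ∑ j : Fin d, Matrix.single i j (1 : ℂ) ⊗ₖ Dblk i j
    let vt : ℝ → (Fin d × Fin n → ℂ) := fun t p => (Real.exp (-t * lam p.1) : ℂ) * v p
    (star v ⬝ᵥ (X *ᵥ v) = ∫ t in Set.Ioi (0 : ℝ), star (vt t) ⬝ᵥ (D *ᵥ vt t)) ∧
      0 ≤ star v ⬝ᵥ (X *ᵥ v) := by
  intro X D vt
  set c : Fin d → Fin d → ℂ := fun i j =>
    ∑ a : Fin n, ∑ b : Fin n, (starRingEnd ℂ) (v (i,a)) * Dblk i j a b * v (j,b) with hc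
  -- entry formulas
  have hDa : ∀ p q, D p q = Dblk p.1 q.1 p.2 q.2 := by
    intro p q
    simp [D, Matrix.sum_apply, Matrix.kroneckerMap_apply, Matrix.single, Matrix.of_apply,
      ite_mul, ite_and, Finset.sum_ite_eq, Finset.sum_ite_eq']
  have hXa : ∀ p q, X p q = ((lam p.1 + lam q.1 : ℂ))⁻¹ * Dblk p.1 q.1 p.2 q.2 := by
    intro p q
    have : ∀ i j : Fin d,
        (if lam i + lam j ≠ 0 then
            Matrix.single i j (1 : ℂ) ⊗ₖ (((lam i + lam j : ℂ)⁻¹) • Dblk i j)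
          else 0)
        = Matrix.single i j (1 : ℂ) ⊗ₖ (((lam i + lam j : ℂ)⁻¹) • Dblk i j) := by
      intro i j
      by_cases h : lam i + lam j = 0
      · simp [h, hzero i j h]
      · simp [h]
    simp only [X, this]
    simp [Matrix.sum_apply, Matrix.kroneckerMap_apply, Matrix.single, Matrix.of_apply,
      ite_mul, ite_and, Finset.sum_ite_eq, Finset.sum_ite_eq', Matrix.smul_apply, smul_eq_mul]
  -- quadratic form of X
  have hL : star v ⬝ᵥ (X *ᵥ v) = ∑ i : Fin d, ∑ j : Fin d, ((lam i + lam j : ℂ))⁻¹ * c i j := by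
    simp only [dotProduct, mulVec, Pi.star_apply, RCLike.star_def, Fintype.sum_prod_type, hXa,
      Finset.mul_sum, hc]
    rw [Finset.sum_congr rfl fun i _ => Finset.sum_comm]
    congr 1; ext i; congr 1; ext j; congr 1; ext a; congr 1; ext b
    ring
  -- quadratic form of D at time t
  have hR : ∀ t : ℝ, star (vt t) ⬝ᵥ (D *ᵥ vt t)
      = ∑ i : Fin d, ∑ j : Fin d, (Real.exp (-((lam i + lam j) * t)) : ℂ) * c i j := by
    intro t
    simp only [vt, dotProduct, mulVec, Pi.star_apply, RCLike.star_def, Fintype.sum_prod_type,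
      hDa, Finset.mul_sum, _root_.map_mul, Complex.conj_ofReal, hc]
    rw [Finset.sum_congr rfl fun i _ => Finset.sum_comm]
    congr 1; ext i; congr 1; ext j; congr 1; ext a; congr 1; ext b
    rw [show (-((lam i + lam j) * t)) = (-t * lam i) + (-t * lam j) by ring, Real.exp_add]
    push_cast
    ring
  -- vanishing coefficients
  have hczero : ∀ i j, lam i + lam j = 0 → c i j = 0 := by
    intro i j h
    simp [hc, hzero i j h]
  -- integrability of each term
  have hint : ∀ i j : Fin d, IntegrableOn
      (fun t : ℝ => (Real.exp (-((lam i + lam j) * t)) : ℂ) * c i j) (Set.Ioi 0) := by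
    intro i j
    rcases eq_or_lt_of_le (add_nonneg (hlam i) (hlam j)) with h | h
    · simp [hczero i j h.symm, integrableOn_const]
    · have h1 : IntegrableOn (fun t : ℝ => Real.exp (-((lam i + lam j) * t))) (Set.Ioi 0) := by
        have h2 := exp_neg_integrableOn_Ioi 0 h
        simp only [neg_mul] at h2
        exact h2
      exact (h1.ofReal (𝕜 := ℂ)).mul_const _
  -- each term's integral
  have hterm : ∀ i j : Fin d,
      ∫ t in Set.Ioi (0:ℝ), (Real.exp (-((lam i + lam j) * t)) : ℂ) * c i j
        = ((lam i + lam j : ℂ))⁻¹ * c i j := by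
    intro i j
    rcases eq_or_lt_of_le (add_nonneg (hlam i) (hlam j)) with h | h
    · simp [hczero i j h.symm]
    · rw [MeasureTheory.integral_mul_const]
      have hcast : ∫ t in Set.Ioi (0:ℝ), ((Real.exp (-((lam i + lam j) * t)) : ℝ) : ℂ)
          = ((∫ t in Set.Ioi (0:ℝ), Real.exp (-((lam i + lam j) * t)) : ℝ) : ℂ) :=
        integral_ofReal
      rw [hcast, aux_exp_integral h]
      push_cast
      ring
  -- the main equality
  have heq : star v ⬝ᵥ (X *ᵥ v) = ∫ t in Set.Ioi (0:ℝ), star (vt t) ⬝ᵥ (D *ᵥ vt t) := by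
    rw [hL]
    rw [MeasureTheory.integral_congr_ae (Filter.EventuallyEq.of_eq (funext hR))]
    rw [MeasureTheory.integral_finset_sum _ (fun i _ => integrable_finset_sum _
      (fun j _ => hint i j))]
    exact Finset.sum_congr rfl fun i _ => by
      rw [MeasureTheory.integral_finset_sum _ (fun j _ => hint i j)]
      exact Finset.sum_congr rfl fun j _ => (hterm i j).symm
  refine ⟨heq, ?_⟩
  -- nonnegativity
  have hg : ∀ t : ℝ, 0 ≤ star (vt t) ⬝ᵥ (D *ᵥ vt t) := fun t => hD.dotProduct_mulVec_nonneg (vt t)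
  have hgi : Integrable (fun t => star (vt t) ⬝ᵥ (D *ᵥ vt t))
      ((volume : Measure ℝ).restrict (Set.Ioi 0)) := by
    rw [show (fun t => star (vt t) ⬝ᵥ (D *ᵥ vt t)) = fun t =>
        ∑ i : Fin d, ∑ j : Fin d, (Real.exp (-((lam i + lam j) * t)) : ℂ) * c i j
      from funext hR]
    exact integrable_finset_sum _ fun i _ => integrable_finset_sum _ fun j _ => hint i j
  rw [heq, Complex.nonneg_iff]
  constructor
  · rw [← RCLike.re_eq_complex_re, ← integral_re hgi]
    exact MeasureTheory.integral_nonneg fun t => by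
      have := (Complex.nonneg_iff.mp (hg t)).1
      simpa using this
  · rw [← RCLike.im_eq_complex_im, ← integral_im hgi]
    symm
    simp only [RCLike.im_eq_complex_im]
    refine MeasureTheory.integral_eq_zero_of_ae (Filter.Eventually.of_forall fun t => ?_)
    exact ((Complex.nonneg_iff.mp (hg t)).2).symm
end

section
/- Let ρ_AB be a bipartite density matrix on C^d ⊗ C^n with ρ_A = Tr_B[ρ_AB]. Then there exists a completely positive trace-preserving map E from d×d to n×n matrices such that the partial transpose satisfies ρ_AB^{T_B} = (1/2){ρ_A ⊗ 1, J[E]}, where J[E] = Σ_{i,j} E_{ij} ⊗ E(E_{ji}) is the Jamiołkowski operator and {·,·} is the anticommutator. -/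
open Matrix Kronecker ComplexOrder BigOperators

/-- The partial trace over the second tensor factor. -/
noncomputable def trB {d n : ℕ} (X : Matrix (Fin d × Fin n) (Fin d × Fin n) ℂ) :
    Matrix (Fin d) (Fin d) ℂ :=
  Matrix.of fun i j => ∑ k : Fin n, X (i, k) (j, k)

/-- Partial transpose on the second tensor factor. -/
def TB {d n : ℕ} (X : Matrix (Fin d × Fin n) (Fin d × Fin n) ℂ) :
    Matrix (Fin d × Fin n) (Fin d × Fin n) ℂ :=
  Matrix.of fun p q => X (p.1, q.2) (q.1, p.2)

/-- The Choi matrix `C[E] = Σ_{i,j} E_{ij} ⊗ E(E_{ij})`. -/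
noncomputable def choi {d n : ℕ}
    (E : Matrix (Fin d) (Fin d) ℂ →ₗ[ℂ] Matrix (Fin n) (Fin n) ℂ) :
    Matrix (Fin d × Fin n) (Fin d × Fin n) ℂ :=
  ∑ i : Fin d, ∑ j : Fin d, Matrix.single i j (1 : ℂ) ⊗ₖ E (Matrix.single i j (1 : ℂ))

/-- The Jamiołkowski operator `J[E] = Σ_{i,j} E_{ij} ⊗ E(E_{ji})`. -/
noncomputable def jam {d n : ℕ}
    (E : Matrix (Fin d) (Fin d) ℂ →ₗ[ℂ] Matrix (Fin n) (Fin n) ℂ) :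
    Matrix (Fin d × Fin n) (Fin d × Fin n) ℂ :=
  ∑ i : Fin d, ∑ j : Fin d, Matrix.single i j (1 : ℂ) ⊗ₖ E (Matrix.single j i (1 : ℂ))

section helpers

open scoped MatrixOrder in
lemma psd_exists_mul_self {m : Type*} [Fintype m] [DecidableEq m] {A : Matrix m m ℂ}
    (h : A.PosSemidef) : ∃ B : Matrix m m ℂ, A = Bᴴ * B := by
  obtain ⟨B, rfl⟩ := CStarAlgebra.nonneg_iff_eq_star_mul_self.mp h.nonneg
  exact ⟨B, rfl⟩

lemma kron_one_mul_apply {d n : ℕ} (M : Matrix (Fin d) (Fin d) ℂ)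
    (X : Matrix (Fin d × Fin n) (Fin d × Fin n) ℂ) (p q : Fin d × Fin n) :
    ((M ⊗ₖ (1 : Matrix (Fin n) (Fin n) ℂ)) * X) p q
      = ∑ a : Fin d, M p.1 a * X (a, p.2) q := by
  rw [Matrix.mul_apply, Fintype.sum_prod_type]
  simp [Matrix.one_apply, Finset.sum_ite_eq', kroneckerMap_apply]

lemma mul_kron_one_apply {d n : ℕ} (N : Matrix (Fin d) (Fin d) ℂ)
    (X : Matrix (Fin d × Fin n) (Fin d × Fin n) ℂ) (p q : Fin d × Fin n) :
    (X * (N ⊗ₖ (1 : Matrix (Fin n) (Fin n) ℂ))) p q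
      = ∑ b : Fin d, X p (b, q.2) * N b q.1 := by
  rw [Matrix.mul_apply, Fintype.sum_prod_type]
  simp [Matrix.one_apply, Finset.sum_ite_eq', kroneckerMap_apply, mul_comm]

lemma trB_conj {d n : ℕ} (M N : Matrix (Fin d) (Fin d) ℂ)
    (X : Matrix (Fin d × Fin n) (Fin d × Fin n) ℂ) :
    trB ((M ⊗ₖ (1 : Matrix (Fin n) (Fin n) ℂ)) * X * (N ⊗ₖ (1 : Matrix (Fin n) (Fin n) ℂ)))
      = M * trB X * N := by
  ext i j
  simp only [trB, Matrix.of_apply]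
  simp only [mul_kron_one_apply, kron_one_mul_apply]
  simp only [Matrix.mul_apply]
  refine (Finset.sum_comm (s := (Finset.univ : Finset (Fin n)))
    (t := (Finset.univ : Finset (Fin d)))
    (f := fun k b => (∑ a : Fin d, M i a * X (a, k) (b, k)) * N b j)).trans ?_
  refine Finset.sum_congr rfl fun b _ => ?_
  rw [← Finset.sum_mul]
  congr 1
  rw [Finset.sum_comm]
  exact Finset.sum_congr rfl fun a _ => (Finset.mul_sum _ _ _).symm

lemma TB_conj {d n : ℕ} (M N : Matrix (Fin d) (Fin d) ℂ)
    (X : Matrix (Fin d × Fin n) (Fin d × Fin n) ℂ) :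
    TB ((M ⊗ₖ (1 : Matrix (Fin n) (Fin n) ℂ)) * X * (N ⊗ₖ (1 : Matrix (Fin n) (Fin n) ℂ)))
      = (M ⊗ₖ (1 : Matrix (Fin n) (Fin n) ℂ)) * TB X * (N ⊗ₖ (1 : Matrix (Fin n) (Fin n) ℂ)) := by
  ext p q
  simp only [TB, Matrix.of_apply]
  simp only [mul_kron_one_apply, kron_one_mul_apply]
  simp only [Matrix.of_apply]

lemma trB_posSemidef {d n : ℕ} {X : Matrix (Fin d × Fin n) (Fin d × Fin n) ℂ}
    (h : X.PosSemidef) : (trB X).PosSemidef := by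
  obtain ⟨R, rfl⟩ := psd_exists_mul_self h
  have : trB (Rᴴ * R)
      = (Matrix.of fun (mk : (Fin d × Fin n) × Fin n) (i : Fin d) => R mk.1 (i, mk.2))ᴴ
        * (Matrix.of fun (mk : (Fin d × Fin n) × Fin n) (i : Fin d) => R mk.1 (i, mk.2)) := by
    ext i j
    simp only [trB, Matrix.of_apply, Matrix.mul_apply, Matrix.conjTranspose_apply,
      Fintype.sum_prod_type]
    refine (Finset.sum_comm (s := (Finset.univ : Finset (Fin n)))
      (t := (Finset.univ : Finset (Fin d)))
      (f := fun k m1 => ∑ m2 : Fin n, star (R (m1, m2) (i, k)) * R (m1, m2) (j, k))).trans ?_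
    exact Finset.sum_congr rfl fun m1 _ => Finset.sum_comm
  rw [this]
  exact Matrix.posSemidef_conjTranspose_mul_self _

lemma kron_one_conjTranspose {d n : ℕ} (M : Matrix (Fin d) (Fin d) ℂ) :
    (M ⊗ₖ (1 : Matrix (Fin n) (Fin n) ℂ))ᴴ = Mᴴ ⊗ₖ (1 : Matrix (Fin n) (Fin n) ℂ) := by
  ext p q
  simp only [Matrix.conjTranspose_apply, kroneckerMap_apply, Matrix.one_apply]
  by_cases h : p.2 = q.2
  · rw [if_pos h.symm, if_pos h]
    simp [star_mul']
  · rw [if_neg (fun hh => h hh.symm), if_neg h]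
    simp

end helpers

section musec
open MeasureTheory Set

lemma integral_exp_neg_mul_Ioi_zero {b : ℝ} (hb : 0 < b) :
    ∫ t in Ioi (0:ℝ), Real.exp (-(b*t)) = b⁻¹ := by
  have := integral_exp_neg_mul_rpow one_pos hb
  simp only [Real.rpow_one] at this
  rw [show (-1/1 : ℝ) = -1 by norm_num, Real.rpow_neg_one,
    show (1/1+1 : ℝ) = 2 by norm_num, Real.Gamma_two, mul_one] at this
  rw [← this]
  congr 1; ext t; ring_nf

lemma mu_posSemidef {d : ℕ} (l : Fin d → ℝ) (hl : ∀ a, 0 ≤ l a) :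
    (Matrix.of fun a b => if l a = 0 ∨ l b = 0 then (0:ℂ)
        else ((2 / (l a + l b) : ℝ) : ℂ)).PosSemidef := by
  have hpos : ∀ a, l a ≠ 0 → 0 < l a := fun a h => lt_of_le_of_ne (hl a) (Ne.symm h)
  rw [Matrix.posSemidef_iff_dotProduct_mulVec]
  constructor
  · ext a b
    simp only [Matrix.conjTranspose_apply, Matrix.of_apply]
    by_cases h : l a = 0 ∨ l b = 0
    · rw [if_pos h, if_pos (by tauto), star_zero]
    · rw [if_neg h, if_neg (by tauto), RCLike.star_def, Complex.conj_ofReal, add_comm]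
  · intro x
    set c : Fin d → ℝ → ℂ := fun a t =>
      if l a = 0 then 0 else x a * ((Real.exp (-(l a * t)) : ℝ) : ℂ) with hc
    have key : ∀ a b : Fin d, l a ≠ 0 → l b ≠ 0 → ∀ t : ℝ,
        (starRingEnd ℂ) (c a t) * c b t
          = (starRingEnd ℂ) (x a) * x b * ((Real.exp (-((l a + l b) * t)) : ℝ) : ℂ) := by
      intro a b ha hb t
      simp only [hc, if_neg ha, if_neg hb, _root_.map_mul, Complex.conj_ofReal]
      rw [show -((l a + l b) * t) = (-(l a * t)) + (-(l b * t)) by ring, Real.exp_add,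
        Complex.ofReal_mul]
      ring
    have hint : ∀ a b : Fin d,
        Integrable (fun t => (starRingEnd ℂ) (c a t) * c b t)
          (volume.restrict (Ioi (0:ℝ))) := by
      intro a b
      by_cases ha : l a = 0
      · simp [hc, ha]
      by_cases hb : l b = 0
      · simp [hc, hb]
      · have h1 : IntegrableOn (fun t : ℝ => Real.exp (-(l a + l b) * t)) (Ioi (0:ℝ)) :=
          exp_neg_integrableOn_Ioi 0 (by have := hpos a ha; have := hpos b hb; positivity)
        have h2 := (h1.ofReal (𝕜 := ℂ)).const_mul ((starRingEnd ℂ) (x a) * x b)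
        refine h2.congr (Filter.Eventually.of_forall fun t => ?_)
        simp only []
        rw [key a b ha hb t, neg_mul]; exact rfl
    have term_eq : ∀ a b : Fin d,
        (if l a = 0 ∨ l b = 0 then (0:ℂ) else ((2 / (l a + l b) : ℝ) : ℂ))
            * ((starRingEnd ℂ) (x a) * x b)
          = 2 * ∫ t in Ioi (0:ℝ), (starRingEnd ℂ) (c a t) * c b t := by
      intro a b
      by_cases ha : l a = 0
      · simp [hc, ha]
      by_cases hb : l b = 0
      · simp [hc, hb]
      · rw [if_neg (by tauto)]
        have hsum : 0 < l a + l b := by have := hpos a ha; have := hpos b hb; positivity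
        have h0 : (∫ t in Ioi (0:ℝ), ((Real.exp (-((l a + l b) * t)) : ℝ) : ℂ))
            = ((∫ t in Ioi (0:ℝ), Real.exp (-((l a + l b) * t)) : ℝ) : ℂ) := integral_ofReal
        have hI : (∫ t in Ioi (0:ℝ), ((Real.exp (-((l a + l b) * t)) : ℝ) : ℂ))
            = (((l a + l b)⁻¹ : ℝ) : ℂ) := by
          rw [h0, integral_exp_neg_mul_Ioi_zero hsum]
        calc ((2 / (l a + l b) : ℝ) : ℂ) * ((starRingEnd ℂ) (x a) * x b)
            = 2 * (((starRingEnd ℂ) (x a) * x b) * (((l a + l b)⁻¹ : ℝ) : ℂ)) := by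
              rw [show ((2 / (l a + l b) : ℝ) : ℂ) = 2 * (((l a + l b)⁻¹ : ℝ) : ℂ) by
                push_cast; ring]
              ring
          _ = 2 * ∫ t in Ioi (0:ℝ), (starRingEnd ℂ) (c a t) * c b t := by
              congr 1
              rw [integral_congr_ae (Filter.Eventually.of_forall fun t => key a b ha hb t),
                integral_const_mul, hI]
    have expand : star x ⬝ᵥ (Matrix.of fun a b => if l a = 0 ∨ l b = 0 then (0:ℂ)
        else ((2 / (l a + l b) : ℝ) : ℂ)) *ᵥ x
        = ∑ a : Fin d, ∑ b : Fin d,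
            (if l a = 0 ∨ l b = 0 then (0:ℂ) else ((2 / (l a + l b) : ℝ) : ℂ))
              * ((starRingEnd ℂ) (x a) * x b) := by
      simp only [dotProduct, mulVec, Pi.star_apply, Matrix.of_apply, Finset.mul_sum,
        dotProduct]
      refine Finset.sum_congr rfl fun a _ => Finset.sum_congr rfl fun b _ => ?_
      simp [RCLike.star_def]
      ring
    rw [expand]
    have step : ∑ a : Fin d, ∑ b : Fin d,
        (if l a = 0 ∨ l b = 0 then (0:ℂ) else ((2 / (l a + l b) : ℝ) : ℂ))
          * ((starRingEnd ℂ) (x a) * x b)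
        = 2 * ((∫ t in Ioi (0:ℝ), Complex.normSq (∑ a : Fin d, c a t) : ℝ) : ℂ) := by
      simp_rw [term_eq, ← Finset.mul_sum]
      congr 1
      calc ∑ a : Fin d, ∑ b : Fin d, ∫ t in Ioi (0:ℝ), (starRingEnd ℂ) (c a t) * c b t
          = ∑ a : Fin d, ∫ t in Ioi (0:ℝ), ∑ b : Fin d, (starRingEnd ℂ) (c a t) * c b t := by
            exact Finset.sum_congr rfl fun a _ =>
              (integral_finset_sum _ fun b _ => hint a b).symm
        _ = ∫ t in Ioi (0:ℝ), ∑ a : Fin d, ∑ b : Fin d, (starRingEnd ℂ) (c a t) * c b t := by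
            exact (integral_finset_sum _ fun a _ =>
              integrable_finset_sum _ fun b _ => hint a b).symm
        _ = ∫ t in Ioi (0:ℝ), ((Complex.normSq (∑ a : Fin d, c a t) : ℝ) : ℂ) := by
            have hpt : ∀ t : ℝ, (∑ a : Fin d, ∑ b : Fin d, (starRingEnd ℂ) (c a t) * c b t)
                = ((Complex.normSq (∑ a : Fin d, c a t) : ℝ) : ℂ) := fun t => by
              rw [← Finset.sum_mul_sum, ← map_sum (starRingEnd ℂ), mul_comm, Complex.mul_conj]
            simp only [hpt]
        _ = ((∫ t in Ioi (0:ℝ), Complex.normSq (∑ a : Fin d, c a t) : ℝ) : ℂ) :=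
            integral_ofReal
    rw [step]
    have hnn : (0:ℝ) ≤ ∫ t in Ioi (0:ℝ), Complex.normSq (∑ a : Fin d, c a t) :=
      integral_nonneg fun t => Complex.normSq_nonneg _
    rw [show (2 : ℂ) * ((∫ t in Ioi (0:ℝ), Complex.normSq (∑ a : Fin d, c a t) : ℝ) : ℂ)
        = ((2 * ∫ t in Ioi (0:ℝ), Complex.normSq (∑ a : Fin d, c a t) : ℝ) : ℂ) by push_cast; ring]
    rw [Complex.le_def]
    simp [Complex.ofReal_re, Complex.ofReal_im]
    positivity
end musec

/-- The Partial Transpose Theorem (existence part): for a bipartite density matrix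
`ρ_AB`, there exists a CPTP map `E` with
`ρ_AB^{T_B} = (1/2){ρ_A ⊗ 1, J[E]}` where `ρ_A = Tr_B[ρ_AB]`. -/
theorem stmt_16 {d n : ℕ} (ρAB : Matrix (Fin d × Fin n) (Fin d × Fin n) ℂ)
    (hρ : ρAB.PosSemidef) (htr : ρAB.trace = 1) :
    ∃ E : Matrix (Fin d) (Fin d) ℂ →ₗ[ℂ] Matrix (Fin n) (Fin n) ℂ,
      (choi E).PosSemidef ∧
      (∀ X : Matrix (Fin d) (Fin d) ℂ, (E X).trace = X.trace) ∧
      TB ρAB = (1 / 2 : ℂ) •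
        ((trB ρAB ⊗ₖ (1 : Matrix (Fin n) (Fin n) ℂ)) * jam E +
          jam E * (trB ρAB ⊗ₖ (1 : Matrix (Fin n) (Fin n) ℂ))) := by
  classical
  -- n ≠ 0
  have hn0 : n ≠ 0 := by
    rintro rfl
    have : ρAB.trace = 0 := by
      rw [Matrix.trace]
      have : (Finset.univ : Finset (Fin d × Fin 0)) = ∅ := by
        ext x; exact Fin.elim0 x.2
      rw [this, Finset.sum_empty]
    rw [this] at htr
    exact one_ne_zero htr.symm
  have hnC : ((n:ℝ) : ℂ) ≠ 0 := by
    exact_mod_cast (Nat.cast_ne_zero (R := ℝ)).mpr hn0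
  -- spectral data of A = trB ρAB
  have hA : (trB ρAB).PosSemidef := trB_posSemidef hρ
  set l : Fin d → ℝ := hA.1.eigenvalues with hldef
  have hl : ∀ a, 0 ≤ l a := fun a => hA.eigenvalues_nonneg a
  have hlpos : ∀ a, l a ≠ 0 → 0 < l a := fun a h => lt_of_le_of_ne (hl a) (Ne.symm h)
  set UU : Matrix (Fin d) (Fin d) ℂ := (hA.1.eigenvectorUnitary : Matrix (Fin d) (Fin d) ℂ)
    with hUUdef
  have hU1 : UU * UUᴴ = 1 := by
    have := (Matrix.mem_unitaryGroup_iff).mp hA.1.eigenvectorUnitary.2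
    simpa [Matrix.star_eq_conjTranspose] using this
  have hU2 : UUᴴ * UU = 1 := by
    have := (Matrix.mem_unitaryGroup_iff').mp hA.1.eigenvectorUnitary.2
    simpa [Matrix.star_eq_conjTranspose] using this
  have hspec : trB ρAB = UU * Matrix.diagonal (fun a => (l a : ℂ)) * UUᴴ := by
    have := hA.1.spectral_theorem
    simpa [Matrix.star_eq_conjTranspose, Function.comp_def] using this
  -- conjugated density matrix
  set ρ' : Matrix (Fin d × Fin n) (Fin d × Fin n) ℂ :=
    (UUᴴ ⊗ₖ (1 : Matrix (Fin n) (Fin n) ℂ)) * ρAB * (UU ⊗ₖ (1 : Matrix (Fin n) (Fin n) ℂ))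
    with hρ'def
  have hρ'psd : ρ'.PosSemidef := by
    rw [hρ'def, ← kron_one_conjTranspose]
    exact hρ.conjTranspose_mul_mul_same _
  have htrB' : trB ρ' = Matrix.diagonal (fun a => (l a : ℂ)) := by
    rw [hρ'def, trB_conj, hspec]
    rw [show UUᴴ * (UU * Matrix.diagonal (fun a => (l a:ℂ)) * UUᴴ) * UU
        = (UUᴴ * UU) * Matrix.diagonal (fun a => (l a:ℂ)) * (UUᴴ * UU) by
      simp only [mul_assoc], hU2, one_mul, mul_one]
  -- vanishing rows/columns on the kernel
  obtain ⟨R, hR⟩ := psd_exists_mul_self hρ'psd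
  have hR0 : ∀ a : Fin d, l a = 0 → ∀ (m : Fin d × Fin n) (k : Fin n), R m (a, k) = 0 := by
    intro a ha
    have h1 : (Matrix.diagonal (fun a => (l a : ℂ))) a a = ∑ k : Fin n, ρ' (a, k) (a, k) := by
      rw [← htrB']; rfl
    rw [Matrix.diagonal_apply_eq, ha, Complex.ofReal_zero] at h1
    have h2 : ∀ p : Fin d × Fin n,
        ρ' p p = ∑ m : Fin d × Fin n, ((Complex.normSq (R m p) : ℝ) : ℂ) := by
      intro p
      rw [hR, Matrix.mul_apply]
      refine Finset.sum_congr rfl fun m _ => ?_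
      rw [Matrix.conjTranspose_apply, RCLike.star_def, mul_comm, Complex.mul_conj]
    simp only [h2] at h1
    have h3 : (0:ℝ) = ∑ k : Fin n, ∑ m : Fin d × Fin n, Complex.normSq (R m (a, k)) := by
      exact_mod_cast h1
    intro m k
    have h4 : ∀ k ∈ (Finset.univ : Finset (Fin n)),
        (0:ℝ) ≤ ∑ m : Fin d × Fin n, Complex.normSq (R m (a, k)) :=
      fun k _ => Finset.sum_nonneg fun m _ => Complex.normSq_nonneg _
    have h5 := (Finset.sum_eq_zero_iff_of_nonneg h4).mp h3.symm k (Finset.mem_univ k)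
    have h6 := (Finset.sum_eq_zero_iff_of_nonneg
      (fun m _ => Complex.normSq_nonneg (R m (a, k)))).mp h5 m (Finset.mem_univ m)
    exact Complex.normSq_eq_zero.mp h6
  have hrow : ∀ a : Fin d, l a = 0 → ∀ (k : Fin n) (q : Fin d × Fin n), ρ' (a, k) q = 0 := by
    intro a ha k q
    rw [hR, Matrix.mul_apply]
    refine Finset.sum_eq_zero fun m _ => ?_
    rw [Matrix.conjTranspose_apply, hR0 a ha m k, star_zero, zero_mul]
  have hcol : ∀ a : Fin d, l a = 0 → ∀ (k : Fin n) (p : Fin d × Fin n), ρ' p (a, k) = 0 := by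
    intro a ha k p
    have h1 : ρ'ᴴ = ρ' := hρ'psd.1
    rw [← h1, Matrix.conjTranspose_apply, hrow a ha k p, star_zero]
  -- the Cauchy multiplier and correction kernel
  set μf : Fin d → Fin d → ℂ := fun a b =>
    if l a = 0 ∨ l b = 0 then 0 else ((2 / (l a + l b) : ℝ) : ℂ) with hμdef
  have hμsymm : ∀ a b, μf a b = μf b a := by
    intro a b
    by_cases h : l a = 0 ∨ l b = 0
    · rw [hμdef]; simp only []
      rw [if_pos h, if_pos (by tauto)]
    · rw [hμdef]; simp only []
      rw [if_neg h, if_neg (by tauto), add_comm]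
  set K : Matrix (Fin d × Fin n) (Fin d × Fin n) ℂ :=
    Matrix.of fun p q => if p.1 = q.1 ∧ p.2 = q.2 ∧ l p.1 = 0 then (((n:ℝ)⁻¹ : ℝ) : ℂ) else 0
    with hKdef
  set J' : Matrix (Fin d × Fin n) (Fin d × Fin n) ℂ :=
    Matrix.of fun p q => μf p.1 q.1 * TB ρ' p q + K p q with hJ'def
  set J : Matrix (Fin d × Fin n) (Fin d × Fin n) ℂ :=
    (UU ⊗ₖ (1 : Matrix (Fin n) (Fin n) ℂ)) * J' * (UUᴴ ⊗ₖ (1 : Matrix (Fin n) (Fin n) ℂ))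
    with hJdef
  have hμ0 : ∀ a b, (l a = 0 ∨ l b = 0) → μf a b = 0 := fun a b h => if_pos h
  have hμv : ∀ a b, ¬(l a = 0 ∨ l b = 0) → μf a b = ((2 / (l a + l b) : ℝ) : ℂ) :=
    fun a b h => if_neg h
  have hKapp : ∀ p q : Fin d × Fin n,
      K p q = if p.1 = q.1 ∧ p.2 = q.2 ∧ l p.1 = 0 then (((n:ℝ)⁻¹ : ℝ) : ℂ) else 0 :=
    fun p q => rfl
  have hJ'app : ∀ p q : Fin d × Fin n, J' p q = μf p.1 q.1 * TB ρ' p q + K p q :=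
    fun p q => rfl
  have hTBapp : ∀ (X : Matrix (Fin d × Fin n) (Fin d × Fin n) ℂ) (p q : Fin d × Fin n),
      TB X p q = X (p.1, q.2) (q.1, p.2) := fun X p q => rfl
  have htrBapp : ∀ (X : Matrix (Fin d × Fin n) (Fin d × Fin n) ℂ) (i j : Fin d),
      trB X i j = ∑ k : Fin n, X (i, k) (j, k) := fun X i j => rfl
  -- partial trace of J' is the identity
  have htrBJ' : trB J' = 1 := by
    ext a b
    rw [htrBapp]
    simp only [hJ'app, hKapp, hTBapp]
    rw [Finset.sum_add_distrib, ← Finset.mul_sum]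
    have hsum1 : (∑ k : Fin n, ρ' ((a, k).1, (b, k).2) ((b, k).1, (a, k).2))
        = Matrix.diagonal (fun a => (l a : ℂ)) a b := by
      rw [← htrB', htrBapp]
    rw [hsum1]
    by_cases hab : a = b
    · subst hab
      by_cases hla : l a = 0
      · rw [hμ0 a a (Or.inl hla), zero_mul, zero_add]
        simp only [hla, and_true, true_and]
        rw [Finset.sum_const, Finset.card_univ, Fintype.card_fin, Matrix.one_apply_eq]
        rw [nsmul_eq_mul]
        push_cast
        field_simp
      · rw [hμv a a (by tauto), Matrix.diagonal_apply_eq, Matrix.one_apply_eq]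
        rw [Finset.sum_eq_zero (fun k _ => by simp [hla] :
          ∀ k ∈ (Finset.univ : Finset (Fin n)), (if a = a ∧ True ∧ l a = 0
            then (((n:ℝ)⁻¹ : ℝ) : ℂ) else 0) = 0), add_zero]
        have hlaC : ((l a : ℝ) : ℂ) ≠ 0 := by exact_mod_cast hla
        rw [show ((2 / (l a + l a) : ℝ) : ℂ) = 2 / ((l a : ℂ) + (l a : ℂ)) by push_cast; ring]
        field_simp
        norm_num
    · rw [Matrix.diagonal_apply_ne _ hab, mul_zero, Matrix.one_apply_ne hab, zero_add]
      refine Finset.sum_eq_zero fun k _ => ?_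
      simp [hab]
  have htrBJ : trB J = 1 := by
    rw [hJdef, trB_conj, htrBJ', mul_one, hU1]
  -- the channel
  set E : Matrix (Fin d) (Fin d) ℂ →ₗ[ℂ] Matrix (Fin n) (Fin n) ℂ :=
    { toFun := fun Y => Matrix.of fun k m => ∑ i : Fin d, ∑ j : Fin d, Y j i * J (i, k) (j, m),
      map_add' := by
        intro Y Z
        ext k m
        simp [Matrix.add_apply, add_mul, Finset.sum_add_distrib]
      map_smul' := by
        intro c Y
        ext k m
        simp [Matrix.smul_apply, smul_eq_mul, Finset.mul_sum, mul_assoc] } with hEdef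
  have hEapp : ∀ (Y : Matrix (Fin d) (Fin d) ℂ) (k m : Fin n),
      E Y k m = ∑ i : Fin d, ∑ j : Fin d, Y j i * J (i, k) (j, m) := fun Y k m => rfl
  -- jam E = J
  have hjam : jam E = J := by
    ext p q
    rw [jam, Matrix.sum_apply]
    have h1 : ∀ i : Fin d,
        (∑ j : Fin d, Matrix.single i j (1:ℂ) ⊗ₖ E (Matrix.single j i (1:ℂ))) p q
          = ∑ j : Fin d, (Matrix.single i j (1:ℂ)) p.1 q.1
              * (E (Matrix.single j i (1:ℂ))) p.2 q.2 := by
      intro i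
      rw [Matrix.sum_apply]
      exact Finset.sum_congr rfl fun j _ => rfl
    simp only [h1]
    have h2 : ∀ i j : Fin d, (E (Matrix.single j i (1:ℂ))) p.2 q.2 = J (i, p.2) (j, q.2) := by
      intro i j
      rw [hEapp]
      rw [Finset.sum_eq_single i]
      · rw [Finset.sum_eq_single j]
        · simp [Matrix.single]
        · intro b _ hb; simp [Matrix.single, Ne.symm hb]
        · intro h; exact absurd (Finset.mem_univ j) h
      · intro a _ ha
        refine Finset.sum_eq_zero fun b _ => ?_
        simp [Matrix.single, Ne.symm ha]
      · intro h; exact absurd (Finset.mem_univ i) h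
    simp only [h2]
    have h3 : ∀ i j : Fin d, (Matrix.single i j (1:ℂ)) p.1 q.1
        = if i = p.1 then (if j = q.1 then 1 else 0) else 0 := by
      intro i j; simp [Matrix.single, ite_and]
    simp only [h3]
    rw [Finset.sum_eq_single p.1]
    · simp only [eq_self_iff_true, if_true]
      rw [Finset.sum_eq_single q.1]
      · simp only [eq_self_iff_true, if_true, one_mul, Prod.mk.eta]
      · intro b _ hb; rw [if_neg hb, zero_mul]
      · intro h; exact absurd (Finset.mem_univ q.1) h
    · intro a _ ha
      refine Finset.sum_eq_zero fun b _ => ?_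
      rw [if_neg ha, zero_mul]
    · intro h; exact absurd (Finset.mem_univ p.1) h
  -- choi entry formula
  have hchoiE : ∀ p q : Fin d × Fin n, choi E p q = J (q.1, p.2) (p.1, q.2) := by
    intro p q
    rw [choi, Matrix.sum_apply]
    have h1 : ∀ i : Fin d,
        (∑ j : Fin d, Matrix.single i j (1:ℂ) ⊗ₖ E (Matrix.single i j (1:ℂ))) p q
          = ∑ j : Fin d, (Matrix.single i j (1:ℂ)) p.1 q.1
              * (E (Matrix.single i j (1:ℂ))) p.2 q.2 := by
      intro i
      rw [Matrix.sum_apply]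
      exact Finset.sum_congr rfl fun j _ => rfl
    simp only [h1]
    have h2 : ∀ i j : Fin d, (E (Matrix.single i j (1:ℂ))) p.2 q.2 = J (j, p.2) (i, q.2) := by
      intro i j
      rw [hEapp]
      rw [Finset.sum_eq_single j]
      · rw [Finset.sum_eq_single i]
        · simp [Matrix.single]
        · intro b _ hb; simp [Matrix.single, Ne.symm hb]
        · intro h; exact absurd (Finset.mem_univ i) h
      · intro a _ ha
        refine Finset.sum_eq_zero fun b _ => ?_
        simp [Matrix.single, Ne.symm ha]
      · intro h; exact absurd (Finset.mem_univ j) h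
    simp only [h2]
    have h3 : ∀ i j : Fin d, (Matrix.single i j (1:ℂ)) p.1 q.1
        = if i = p.1 then (if j = q.1 then 1 else 0) else 0 := by
      intro i j; simp [Matrix.single, ite_and]
    simp only [h3]
    rw [Finset.sum_eq_single p.1]
    · simp only [eq_self_iff_true, if_true]
      rw [Finset.sum_eq_single q.1]
      · simp only [eq_self_iff_true, if_true, one_mul]
      · intro b _ hb; rw [if_neg hb, zero_mul]
      · intro h; exact absurd (Finset.mem_univ q.1) h
    · intro a _ ha
      refine Finset.sum_eq_zero fun b _ => ?_
      rw [if_neg ha, zero_mul]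
    · intro h; exact absurd (Finset.mem_univ p.1) h
  -- kronecker unitarity
  have hKU1 : (UU ⊗ₖ (1 : Matrix (Fin n) (Fin n) ℂ)) * (UUᴴ ⊗ₖ (1 : Matrix (Fin n) (Fin n) ℂ))
      = 1 := by
    rw [← Matrix.mul_kronecker_mul, hU1, mul_one, Matrix.one_kronecker_one]
  have hKU2 : (UUᴴ ⊗ₖ (1 : Matrix (Fin n) (Fin n) ℂ)) * (UU ⊗ₖ (1 : Matrix (Fin n) (Fin n) ℂ))
      = 1 := by
    rw [← Matrix.mul_kronecker_mul, hU2, mul_one, Matrix.one_kronecker_one]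
  refine ⟨E, ?_, ?_, ?_⟩
  · -- choi PSD
    obtain ⟨γ, hγ⟩ := psd_exists_mul_self (mu_posSemidef l hl)
    obtain ⟨C, hC⟩ := psd_exists_mul_self hρ'psd.transpose
    set F : Matrix (Fin d × (Fin d × Fin n)) (Fin d × Fin n) ℂ :=
      Matrix.of fun mc p => γ mc.1 p.1 * C mc.2 p with hFdef
    have hKdpsd : (Matrix.diagonal (fun p : Fin d × Fin n =>
        if l p.1 = 0 then (((n:ℝ)⁻¹ : ℝ) : ℂ) else 0)).PosSemidef := by
      refine Matrix.PosSemidef.diagonal fun p => ?_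
      dsimp only
      split
      · rw [Complex.le_def]
        constructor
        · simp only [Complex.zero_re, Complex.ofReal_re]
          positivity
        · simp
      · exact le_refl 0
    have hTAJ' : (Matrix.of fun p q : Fin d × Fin n => J' (q.1, p.2) (p.1, q.2)).PosSemidef := by
      have heq : (Matrix.of fun p q : Fin d × Fin n => J' (q.1, p.2) (p.1, q.2))
          = Fᴴ * F + Matrix.diagonal (fun p : Fin d × Fin n =>
              if l p.1 = 0 then (((n:ℝ)⁻¹ : ℝ) : ℂ) else 0) := by
        ext p q
        rw [Matrix.of_apply, Matrix.add_apply, hJ'app, hKapp, hTBapp]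
        have hFF : (Fᴴ * F) p q = μf p.1 q.1 * ρ'ᵀ p q := by
          rw [Matrix.mul_apply, Fintype.sum_prod_type]
          have h4 : ∀ (m : Fin d) (c : Fin d × Fin n),
              Fᴴ p (m, c) * F (m, c) q
                = (star (γ m p.1) * γ m q.1) * (star (C c p) * C c q) := by
            intro m c
            rw [Matrix.conjTranspose_apply]
            simp only [hFdef, Matrix.of_apply, star_mul']
            ring
          simp only [h4]
          have h5 : (∑ m : Fin d, ∑ c : Fin d × Fin n,
              (star (γ m p.1) * γ m q.1) * (star (C c p) * C c q))
                = (∑ m : Fin d, star (γ m p.1) * γ m q.1)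
                  * (∑ c : Fin d × Fin n, star (C c p) * C c q) := by
            rw [Finset.sum_mul_sum]
          rw [h5]
          have h6 : (∑ m : Fin d, star (γ m p.1) * γ m q.1) = μf p.1 q.1 := by
            rw [show μf p.1 q.1 = (γᴴ * γ) p.1 q.1 by rw [← hγ]; rfl, Matrix.mul_apply]
            exact Finset.sum_congr rfl fun m _ => by rw [Matrix.conjTranspose_apply]
          have h7 : (∑ c : Fin d × Fin n, star (C c p) * C c q) = ρ'ᵀ p q := by
            rw [show ρ'ᵀ p q = (Cᴴ * C) p q by rw [← hC], Matrix.mul_apply]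
            exact Finset.sum_congr rfl fun c _ => by rw [Matrix.conjTranspose_apply]
          rw [h6, h7]
        rw [hFF]
        congr 1
        · -- μf q.1 p.1 * ρ' (q.1, q.2) (p.1, p.2) = μf p.1 q.1 * ρ'ᵀ p q
          rw [hμsymm q.1 p.1, Matrix.transpose_apply]
        · -- K part vs diagonal
          rw [Matrix.diagonal_apply]
          by_cases hpq : p = q
          · subst hpq
            simp
          · rw [if_neg hpq, if_neg]
            rintro ⟨h1, h2, h3⟩
            exact hpq (Prod.ext h1.symm h2)
      rw [heq]
      exact (Matrix.posSemidef_conjTranspose_mul_self F).add hKdpsd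
    have hchoi : choi E = (UUᵀ ⊗ₖ (1 : Matrix (Fin n) (Fin n) ℂ))ᴴ
        * (Matrix.of fun p q : Fin d × Fin n => J' (q.1, p.2) (p.1, q.2))
        * (UUᵀ ⊗ₖ (1 : Matrix (Fin n) (Fin n) ℂ)) := by
      ext p q
      rw [hchoiE p q, kron_one_conjTranspose]
      -- LHS : J (q.1,p.2) (p.1,q.2)
      rw [hJdef]
      rw [mul_kron_one_apply, mul_kron_one_apply]
      simp only [kron_one_mul_apply]
      -- both sides are double sums now
      have hL : ∀ b : Fin d, (∑ a : Fin d, UU (q.1, p.2).1 a * J' (a, (q.1,p.2).2) (b, (p.1,q.2).2))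
            * UUᴴ b (p.1, q.2).1
          = ∑ a : Fin d, UU q.1 a * J' (a, p.2) (b, q.2) * star (UU p.1 b) := by
        intro b
        rw [Finset.sum_mul]
        exact Finset.sum_congr rfl fun a _ => by rw [Matrix.conjTranspose_apply]
      have hRr : ∀ b : Fin d,
          (∑ a : Fin d, (UUᵀ)ᴴ p.1 a
              * (Matrix.of fun p q : Fin d × Fin n => J' (q.1, p.2) (p.1, q.2)) (a, p.2) (b, q.2))
            * (UUᵀ) b q.1
          = ∑ a : Fin d, star (UU p.1 a) * J' (b, p.2) (a, q.2) * UU q.1 b := by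
        intro b
        rw [Finset.sum_mul]
        refine Finset.sum_congr rfl fun a _ => ?_
        rw [Matrix.conjTranspose_apply, Matrix.transpose_apply, Matrix.transpose_apply,
          Matrix.of_apply]
      simp only [hL, hRr]
      rw [Finset.sum_comm]
      refine Finset.sum_congr rfl fun b _ => Finset.sum_congr rfl fun a _ => by ring
    rw [hchoi]
    exact hTAJ'.conjTranspose_mul_mul_same _
  · -- trace preserving
    intro X
    have ht1 : (E X).trace = ∑ k : Fin n, ∑ i : Fin d, ∑ j : Fin d, X j i * J (i, k) (j, k) := by
      rw [Matrix.trace]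
      exact Finset.sum_congr rfl fun k _ => hEapp X k k
    rw [ht1]
    rw [Finset.sum_comm]
    have ht2 : ∀ i : Fin d, (∑ k : Fin n, ∑ j : Fin d, X j i * J (i, k) (j, k))
        = ∑ j : Fin d, X j i * ∑ k : Fin n, J (i, k) (j, k) := by
      intro i
      rw [Finset.sum_comm]
      exact Finset.sum_congr rfl fun j _ => (Finset.mul_sum _ _ _).symm
    simp only [ht2]
    have ht3 : ∀ i j : Fin d, (∑ k : Fin n, J (i, k) (j, k)) = (1 : Matrix (Fin d) (Fin d) ℂ) i j := by
      intro i j; rw [← htrBJ]; rfl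
    simp only [ht3, Matrix.one_apply]
    rw [Matrix.trace]
    refine Finset.sum_congr rfl fun i _ => ?_
    rw [Finset.sum_eq_single i]
    · simp
    · intro b _ hb; simp [Ne.symm hb]
    · intro h; exact absurd (Finset.mem_univ i) h
  · -- the equation
    have hρback : ρAB = (UU ⊗ₖ (1 : Matrix (Fin n) (Fin n) ℂ)) * ρ'
        * (UUᴴ ⊗ₖ (1 : Matrix (Fin n) (Fin n) ℂ)) := by
      rw [hρ'def]
      simp only [← mul_assoc]
      rw [hKU1, one_mul, mul_assoc, hKU1, mul_one]
    have hDkron : (Matrix.diagonal (fun a => (l a : ℂ))) ⊗ₖ (1 : Matrix (Fin n) (Fin n) ℂ)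
        = Matrix.diagonal (fun p : Fin d × Fin n => (l p.1 : ℂ)) := by
      rw [show (1 : Matrix (Fin n) (Fin n) ℂ) = Matrix.diagonal (fun _ => (1:ℂ)) from
        Matrix.diagonal_one.symm, Matrix.diagonal_kronecker_diagonal]
      simp
    have hcore : TB ρ' = (1/2 : ℂ) •
        (Matrix.diagonal (fun p : Fin d × Fin n => (l p.1 : ℂ)) * J'
          + J' * Matrix.diagonal (fun p : Fin d × Fin n => (l p.1 : ℂ))) := by
      ext p q
      rw [Matrix.smul_apply, Matrix.add_apply, Matrix.diagonal_mul, Matrix.mul_diagonal]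
      rw [hJ'app, hKapp, hTBapp]
      by_cases hp : l p.1 = 0
      · rw [hrow p.1 hp q.2 (q.1, p.2)]
        rw [hμ0 _ _ (Or.inl hp), zero_mul, zero_add]
        by_cases hc : p.1 = q.1 ∧ p.2 = q.2 ∧ l p.1 = 0
        · have hq : l q.1 = 0 := hc.1 ▸ hp
          simp [hp, hq, hc]
        · rw [if_neg hc]
          simp
      · by_cases hq : l q.1 = 0
        · rw [hcol q.1 hq p.2 (p.1, q.2)]
          rw [hμ0 _ _ (Or.inr hq), zero_mul, zero_add, if_neg (fun hc => hp hc.2.2)]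
          simp
        · rw [if_neg (fun hc => hp hc.2.2), add_zero, hμv _ _ (by tauto)]
          have h1 : 0 < l p.1 + l q.1 := by
            have := hlpos _ hp; have := hlpos _ hq; positivity
          have hsC : ((l p.1 : ℂ) + (l q.1 : ℂ)) ≠ 0 := by
            rw [show ((l p.1 : ℂ) + (l q.1 : ℂ)) = ((l p.1 + l q.1 : ℝ) : ℂ) by push_cast; ring]
            exact_mod_cast ne_of_gt h1
          rw [show ((2 / (l p.1 + l q.1) : ℝ) : ℂ) = 2 / ((l p.1 : ℂ) + (l q.1 : ℂ)) by
            push_cast; ring]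
          field_simp
          ring
    have hcanc : ∀ X : Matrix (Fin d × Fin n) (Fin d × Fin n) ℂ,
        X * (UUᴴ ⊗ₖ (1 : Matrix (Fin n) (Fin n) ℂ)) * (UU ⊗ₖ (1 : Matrix (Fin n) (Fin n) ℂ))
          = X := fun X => by rw [mul_assoc, hKU2, mul_one]
    have hAkron : trB ρAB ⊗ₖ (1 : Matrix (Fin n) (Fin n) ℂ)
        = (UU ⊗ₖ (1 : Matrix (Fin n) (Fin n) ℂ))
          * Matrix.diagonal (fun p : Fin d × Fin n => (l p.1 : ℂ))
          * (UUᴴ ⊗ₖ (1 : Matrix (Fin n) (Fin n) ℂ)) := by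
      have e2 : (UU ⊗ₖ (1 : Matrix (Fin n) (Fin n) ℂ))
          * ((Matrix.diagonal fun a => (l a : ℂ)) ⊗ₖ (1 : Matrix (Fin n) (Fin n) ℂ))
          = (UU * Matrix.diagonal fun a => (l a : ℂ)) ⊗ₖ (1 : Matrix (Fin n) (Fin n) ℂ) := by
        rw [← Matrix.mul_kronecker_mul, mul_one]
      rw [← hDkron, e2, ← Matrix.mul_kronecker_mul, mul_one, ← hspec]
    have hAJ : (trB ρAB ⊗ₖ (1 : Matrix (Fin n) (Fin n) ℂ)) * jam E
        = (UU ⊗ₖ (1 : Matrix (Fin n) (Fin n) ℂ))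
          * (Matrix.diagonal (fun p : Fin d × Fin n => (l p.1 : ℂ)) * J')
          * (UUᴴ ⊗ₖ (1 : Matrix (Fin n) (Fin n) ℂ)) := by
      rw [hjam, hJdef, hAkron]
      simp only [← mul_assoc]
      rw [hcanc]
    have hJA : jam E * (trB ρAB ⊗ₖ (1 : Matrix (Fin n) (Fin n) ℂ))
        = (UU ⊗ₖ (1 : Matrix (Fin n) (Fin n) ℂ))
          * (J' * Matrix.diagonal (fun p : Fin d × Fin n => (l p.1 : ℂ)))
          * (UUᴴ ⊗ₖ (1 : Matrix (Fin n) (Fin n) ℂ)) := by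
      rw [hjam, hJdef, hAkron]
      simp only [← mul_assoc]
      rw [hcanc]
    calc TB ρAB
        = TB ((UU ⊗ₖ (1 : Matrix (Fin n) (Fin n) ℂ)) * ρ'
            * (UUᴴ ⊗ₖ (1 : Matrix (Fin n) (Fin n) ℂ))) := by rw [← hρback]
      _ = (UU ⊗ₖ (1 : Matrix (Fin n) (Fin n) ℂ)) * TB ρ'
            * (UUᴴ ⊗ₖ (1 : Matrix (Fin n) (Fin n) ℂ)) := TB_conj _ _ _
      _ = (1/2 : ℂ) • ((UU ⊗ₖ (1 : Matrix (Fin n) (Fin n) ℂ))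
            * (Matrix.diagonal (fun p : Fin d × Fin n => (l p.1 : ℂ)) * J')
            * (UUᴴ ⊗ₖ (1 : Matrix (Fin n) (Fin n) ℂ))
          + (UU ⊗ₖ (1 : Matrix (Fin n) (Fin n) ℂ))
            * (J' * Matrix.diagonal (fun p : Fin d × Fin n => (l p.1 : ℂ)))
            * (UUᴴ ⊗ₖ (1 : Matrix (Fin n) (Fin n) ℂ))) := by
          rw [hcore]
          rw [Matrix.mul_smul, Matrix.smul_mul]
          rw [mul_add, add_mul]
      _ = (1 / 2 : ℂ) • ((trB ρAB ⊗ₖ (1 : Matrix (Fin n) (Fin n) ℂ)) * jam E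
            + jam E * (trB ρAB ⊗ₖ (1 : Matrix (Fin n) (Fin n) ℂ))) := by
          rw [hAJ, hJA]
end
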